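/- With the same setup as the two-scenarios inverse-transformation theorem (p ∈ (0,1), q ∈ [0,1], p ≠ q, X Bernoulli with P[X=1]=p and Q[X=1]=q), the following are equivalent: (a) there exist probability measures μ0, μ1 on F_Y with P_{Y'} = (1−p)μ0 + pμ1 and Q_{Y'} = (1−q)μ0 + qμ1; (b) the signed measures (q/(q−p))P_{Y'} − (p/(q−p))Q_{Y'} and ((1−p)/(q−p))Q_{Y'} − ((1−q)/(q−p))P_{Y'} are both nonnegative. -/

import Mathlib

open MeasureTheory

lemma aux_mix {Y : Type*} [MeasurableSpace Y]
    (νP νQ : Measure Y) [IsProbabilityMeasure νP] [IsProbabilityMeasure νQ]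
    (p q : ℝ) (hp0 : 0 ≤ p) (hq1 : q ≤ 1) (hlt : p < q)
    (h : ∀ A : Set Y, MeasurableSet A →
        p * (νQ A).toReal ≤ q * (νP A).toReal ∧
        (1 - q) * (νP A).toReal ≤ (1 - p) * (νQ A).toReal) :
    ∃ μ0 μ1 : Measure Y, IsProbabilityMeasure μ0 ∧ IsProbabilityMeasure μ1 ∧
        νP = ENNReal.ofReal (1 - p) • μ0 + ENNReal.ofReal p • μ1 ∧
        νQ = ENNReal.ofReal (1 - q) • μ0 + ENNReal.ofReal q • μ1 := by
  have hd : (0:ℝ) < q - p := by linarith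
  set a : ℝ := q / (q - p) with ha
  set b : ℝ := p / (q - p) with hb
  set c : ℝ := (1 - p) / (q - p) with hc
  set d : ℝ := (1 - q) / (q - p) with hd'
  have ha0 : 0 ≤ a := div_nonneg (by linarith) hd.le
  have hb0 : 0 ≤ b := div_nonneg hp0 hd.le
  have hc0 : 0 ≤ c := div_nonneg (by linarith) hd.le
  have hd0 : 0 ≤ d := div_nonneg (by linarith) hd.le
  -- pointwise real values
  have key0 : ∀ A : Set Y, MeasurableSet A →
      0 ≤ a * (νP A).toReal - b * (νQ A).toReal := by
    intro A hA
    rw [ha, hb, div_mul_eq_mul_div, div_mul_eq_mul_div, ← sub_div]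
    exact div_nonneg (by linarith [(h A hA).1]) hd.le
  have key1 : ∀ A : Set Y, MeasurableSet A →
      0 ≤ c * (νQ A).toReal - d * (νP A).toReal := by
    intro A hA
    rw [hc, hd', div_mul_eq_mul_div, div_mul_eq_mul_div, ← sub_div]
    exact div_nonneg (by linarith [(h A hA).2]) hd.le
  have hfin : ∀ (ν : Measure Y) [IsProbabilityMeasure ν] (A : Set Y), ν A ≠ ⊤ :=
    fun ν _ A => measure_ne_top ν A
  -- measures
  set μ0 : Measure Y := ENNReal.ofReal a • νP - ENNReal.ofReal b • νQ with hμ0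
  set μ1 : Measure Y := ENNReal.ofReal c • νQ - ENNReal.ofReal d • νP with hμ1
  have hle0 : ENNReal.ofReal b • νQ ≤ ENNReal.ofReal a • νP := by
    rw [Measure.le_iff]
    intro s hs
    simp only [Measure.smul_apply, smul_eq_mul]
    rw [← ENNReal.ofReal_toReal (measure_ne_top νQ s), ← ENNReal.ofReal_toReal (measure_ne_top νP s),
      ← ENNReal.ofReal_mul hb0, ← ENNReal.ofReal_mul ha0]
    exact ENNReal.ofReal_le_ofReal (by linarith [key0 s hs])
  have hle1 : ENNReal.ofReal d • νP ≤ ENNReal.ofReal c • νQ := by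
    rw [Measure.le_iff]
    intro s hs
    simp only [Measure.smul_apply, smul_eq_mul]
    rw [← ENNReal.ofReal_toReal (measure_ne_top νQ s), ← ENNReal.ofReal_toReal (measure_ne_top νP s),
      ← ENNReal.ofReal_mul hd0, ← ENNReal.ofReal_mul hc0]
    exact ENNReal.ofReal_le_ofReal (by linarith [key1 s hs])
  have hfin0 : IsFiniteMeasure (ENNReal.ofReal b • νQ) := by
    constructor
    simp [ENNReal.mul_lt_top, ENNReal.ofReal_lt_top]
  have hfin1 : IsFiniteMeasure (ENNReal.ofReal d • νP) := by
    constructor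
    simp [ENNReal.mul_lt_top, ENNReal.ofReal_lt_top]
  have happ0 : ∀ A : Set Y, MeasurableSet A →
      μ0 A = ENNReal.ofReal (a * (νP A).toReal - b * (νQ A).toReal) := by
    intro A hA
    rw [hμ0, Measure.sub_apply hA hle0]
    simp only [Measure.smul_apply, smul_eq_mul]
    rw [← ENNReal.ofReal_toReal (measure_ne_top νQ A), ← ENNReal.ofReal_toReal (measure_ne_top νP A),
      ← ENNReal.ofReal_mul hb0, ← ENNReal.ofReal_mul ha0,
      ENNReal.ofReal_sub _ (by positivity)]
    rw [ENNReal.toReal_ofReal ENNReal.toReal_nonneg, ENNReal.toReal_ofReal ENNReal.toReal_nonneg]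
  have happ1 : ∀ A : Set Y, MeasurableSet A →
      μ1 A = ENNReal.ofReal (c * (νQ A).toReal - d * (νP A).toReal) := by
    intro A hA
    rw [hμ1, Measure.sub_apply hA hle1]
    simp only [Measure.smul_apply, smul_eq_mul]
    rw [← ENNReal.ofReal_toReal (measure_ne_top νQ A), ← ENNReal.ofReal_toReal (measure_ne_top νP A),
      ← ENNReal.ofReal_mul hd0, ← ENNReal.ofReal_mul hc0,
      ENNReal.ofReal_sub _ (by positivity)]
    rw [ENNReal.toReal_ofReal ENNReal.toReal_nonneg, ENNReal.toReal_ofReal ENNReal.toReal_nonneg]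
  have hprob0 : IsProbabilityMeasure μ0 := by
    constructor
    rw [happ0 Set.univ MeasurableSet.univ]
    simp only [measure_univ, ENNReal.toReal_one, mul_one]
    rw [ha, hb, ← sub_div, div_self hd.ne']
    simp
  have hprob1 : IsProbabilityMeasure μ1 := by
    constructor
    rw [happ1 Set.univ MeasurableSet.univ]
    simp only [measure_univ, ENNReal.toReal_one, mul_one]
    rw [hc, hd', ← sub_div]
    have : (1 - p) - (1 - q) = q - p := by ring
    rw [this, div_self hd.ne']
    simp
  refine ⟨μ0, μ1, hprob0, hprob1, ?_, ?_⟩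
  · ext A hA
    rw [Measure.add_apply]
    simp only [Measure.smul_apply, smul_eq_mul]
    rw [happ0 A hA, happ1 A hA,
      ← ENNReal.ofReal_mul (by linarith : (0:ℝ) ≤ 1 - p),
      ← ENNReal.ofReal_mul hp0,
      ← ENNReal.ofReal_add (by nlinarith [key0 A hA] : (0:ℝ) ≤ (1-p) * (a * (νP A).toReal - b * (νQ A).toReal)) (by nlinarith [key1 A hA]),
      ← ENNReal.ofReal_toReal (measure_ne_top νP A)]
    congr 1
    rw [ha, hb, hc, hd']
    field_simp
    rw [ENNReal.toReal_ofReal ENNReal.toReal_nonneg]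
    ring
  · ext A hA
    rw [Measure.add_apply]
    simp only [Measure.smul_apply, smul_eq_mul]
    rw [happ0 A hA, happ1 A hA,
      ← ENNReal.ofReal_mul (by linarith : (0:ℝ) ≤ 1 - q),
      ← ENNReal.ofReal_mul (by linarith : (0:ℝ) ≤ q),
      ← ENNReal.ofReal_add (by nlinarith [key0 A hA] : (0:ℝ) ≤ (1-q) * (a * (νP A).toReal - b * (νQ A).toReal)) (by nlinarith [key1 A hA]),
      ← ENNReal.ofReal_toReal (measure_ne_top νQ A)]
    congr 1
    rw [ha, hb, hc, hd']
    field_simp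
    rw [ENNReal.toReal_ofReal ENNReal.toReal_nonneg]
    ring

/-- Equivalence of the mixture representation (a) and nonnegativity of the two
signed measures (b) in the inverse-transformation theorem. -/
theorem mixture_iff_signed_nonneg
    {Y : Type*} [MeasurableSpace Y]
    (νP νQ : Measure Y) [IsProbabilityMeasure νP] [IsProbabilityMeasure νQ]
    (p q : ℝ) (hp : p ∈ Set.Ioo (0:ℝ) 1) (hq : q ∈ Set.Icc (0:ℝ) 1) (hpq : p ≠ q) :
    (∃ μ0 μ1 : Measure Y, IsProbabilityMeasure μ0 ∧ IsProbabilityMeasure μ1 ∧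
        νP = ENNReal.ofReal (1 - p) • μ0 + ENNReal.ofReal p • μ1 ∧
        νQ = ENNReal.ofReal (1 - q) • μ0 + ENNReal.ofReal q • μ1)
    ↔ (∀ A : Set Y, MeasurableSet A →
        0 ≤ (q / (q - p)) * (νP A).toReal - (p / (q - p)) * (νQ A).toReal ∧
        0 ≤ ((1 - p) / (q - p)) * (νQ A).toReal - ((1 - q) / (q - p)) * (νP A).toReal) := by
  obtain ⟨hp0, hp1⟩ := hp
  obtain ⟨hq0, hq1⟩ := hq
  constructor
  · rintro ⟨μ0, μ1, h0, h1, hP, hQ⟩ A hA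
    have hm0 : (μ0 A).toReal ≤ 1 := by
      have := prob_le_one (μ := μ0) (s := A)
      exact ENNReal.toReal_le_of_le_ofReal one_pos.le (by simpa using this)
    have hxP : (νP A).toReal = (1 - p) * (μ0 A).toReal + p * (μ1 A).toReal := by
      rw [hP]
      rw [Measure.add_apply]
      simp only [Measure.smul_apply, smul_eq_mul]
      rw [ENNReal.toReal_add (by finiteness) (by finiteness), ENNReal.toReal_mul,
        ENNReal.toReal_mul, ENNReal.toReal_ofReal (by linarith), ENNReal.toReal_ofReal hp0.le]
    have hxQ : (νQ A).toReal = (1 - q) * (μ0 A).toReal + q * (μ1 A).toReal := by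
      rw [hQ]
      rw [Measure.add_apply]
      simp only [Measure.smul_apply, smul_eq_mul]
      rw [ENNReal.toReal_add (by finiteness) (by finiteness), ENNReal.toReal_mul,
        ENNReal.toReal_mul, ENNReal.toReal_ofReal (by linarith), ENNReal.toReal_ofReal hq0]
    have hne : q - p ≠ 0 := sub_ne_zero.mpr (Ne.symm hpq)
    constructor
    · have : (q / (q - p)) * (νP A).toReal - (p / (q - p)) * (νQ A).toReal
          = (μ0 A).toReal := by
        rw [hxP, hxQ]; field_simp; ring
      rw [this]; exact ENNReal.toReal_nonneg
    · have : ((1 - p) / (q - p)) * (νQ A).toReal - ((1 - q) / (q - p)) * (νP A).toReal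
          = (μ1 A).toReal := by
        rw [hxP, hxQ]; field_simp; ring
      rw [this]; exact ENNReal.toReal_nonneg
  · intro h
    rcases lt_or_gt_of_ne hpq with hlt | hgt
    · apply aux_mix νP νQ p q hp0.le hq1 hlt
      intro A hA
      obtain ⟨h1', h2'⟩ := h A hA
      have hd : (0:ℝ) < q - p := by linarith
      have e1 : (q / (q - p) * (νP A).toReal - p / (q - p) * (νQ A).toReal) * (q - p)
          = q * (νP A).toReal - p * (νQ A).toReal := by field_simp
      have e2 : ((1 - p) / (q - p) * (νQ A).toReal - (1 - q) / (q - p) * (νP A).toReal) * (q - p)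
          = (1 - p) * (νQ A).toReal - (1 - q) * (νP A).toReal := by field_simp
      constructor
      · nlinarith [mul_nonneg h1' hd.le, e1]
      · nlinarith [mul_nonneg h2' hd.le, e2]
    · obtain ⟨μ0, μ1, h0, h1, hQ', hP'⟩ :=
        aux_mix νQ νP q p hq0 hp1.le hgt (by
          intro A hA
          obtain ⟨h1', h2'⟩ := h A hA
          have hd : (0:ℝ) < p - q := by linarith
          have hne : q - p ≠ 0 := by linarith
          have e1 : (q / (q - p) * (νP A).toReal - p / (q - p) * (νQ A).toReal) * (p - q)
              = p * (νQ A).toReal - q * (νP A).toReal := by field_simp; ring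
          have e2 : ((1 - p) / (q - p) * (νQ A).toReal - (1 - q) / (q - p) * (νP A).toReal) * (p - q)
              = (1 - q) * (νP A).toReal - (1 - p) * (νQ A).toReal := by field_simp; ring
          constructor
          · nlinarith [mul_nonneg h1' hd.le, e1]
          · nlinarith [mul_nonneg h2' hd.le, e2])
      exact ⟨μ0, μ1, h0, h1, hP', hQ'⟩
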